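/- Let u, v ∈ Z2^α × Z4^β with 2u*v = 0. Then [Φ(u), Φ(v)]_2 = 0 in Z2 if and only if [u,v] = 0 in Z4. More precisely, [u,v] = 2·[Φ(u),Φ(v)]_2 (lifting the binary inner product to {0,1} ⊂ Z4). -/

import Mathlib

open Finset

/-- The ambient mixed alphabet space `Z2^α × Z4^β`. -/
abbrev Amb (α β : ℕ) := (Fin α → ZMod 2) × (Fin β → ZMod 4)

/-- The binary space `Z2^{α+2β}`, represented as `Z2^α × Z2^β × Z2^β`
(binary part, first Gray bits, second Gray bits). -/
abbrev Bin (α β : ℕ) := (Fin α → ZMod 2) × (Fin β → ZMod 2) × (Fin β → ZMod 2)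

/-- The `Z4`-valued inner product `[u,v] = 2·Σ u_i v_i + Σ u'_j v'_j`. -/
def zinner {α β : ℕ} (u v : Amb α β) : ZMod 4 :=
  2 * ∑ i, ((u.1 i).val : ZMod 4) * ((v.1 i).val : ZMod 4) + ∑ j, u.2 j * v.2 j

/-- The dual of a subset of the mixed ambient space. -/
def zdual {α β : ℕ} (C : Set (Amb α β)) : Set (Amb α β) :=
  {v | ∀ u ∈ C, zinner u v = 0}

/-- The vector `2u*v = (0 | 2u'*v')` (componentwise product; doubling kills the binary part). -/
def star2 {α β : ℕ} (u v : Amb α β) : Amb α β :=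
  (0, fun j => 2 * u.2 j * v.2 j)

/-- The usual Gray map `Z4 → Z2²`. -/
def gray (x : ZMod 4) : ZMod 2 × ZMod 2 :=
  match x.val with
  | 0 => (0, 0)
  | 1 => (0, 1)
  | 2 => (1, 1)
  | _ => (1, 0)

/-- The extended Gray map `Φ : Z2^α × Z4^β → Z2^{α+2β}`. -/
def Phi {α β : ℕ} (u : Amb α β) : Bin α β :=
  (u.1, fun j => (gray (u.2 j)).1, fun j => (gray (u.2 j)).2)

/-- The standard binary inner product on `Z2^{α+2β}`. -/
def binner {α β : ℕ} (x y : Bin α β) : ZMod 2 :=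
  ∑ i, x.1 i * y.1 i + ∑ j, x.2.1 j * y.2.1 j + ∑ j, x.2.2 j * y.2.2 j

/-- The dual of a subset of `Z2^{α+2β}`. -/
def bdual {α β : ℕ} (S : Set (Bin α β)) : Set (Bin α β) :=
  {y | ∀ x ∈ S, binner x y = 0}

/-- A subset of `Z2^{α+2β}` is a linear binary code if it is a linear subspace. -/
def IsLinear {α β : ℕ} (S : Set (Bin α β)) : Prop :=
  ∃ M : Submodule (ZMod 2) (Bin α β), ↑M = S

/-- The set `D_C = {2u*v : u ∈ C, v ∈ C⊥}`. -/
def DC {α β : ℕ} (C : Set (Amb α β)) : Set (Amb α β) :=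
  {x | ∃ u ∈ C, ∃ v ∈ zdual C, x = star2 u v}

/-- The standard binary inner product on `Z2^n`. -/
def binner2 {n : ℕ} (u v : Fin n → ZMod 2) : ZMod 2 := ∑ i, u i * v i

/-- The dual of a subset of `Z2^n`. -/
def bdual2 {n : ℕ} (C : Set (Fin n → ZMod 2)) : Set (Fin n → ZMod 2) :=
  {v | ∀ u ∈ C, binner2 u v = 0}

/- The additive hom `ZMod 2 →+ ZMod 4`, `x ↦ 2·x.val`. -/
def f24 : ZMod 2 →+ ZMod 4 where
  toFun x := 2 * (x.val : ZMod 4)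
  map_zero' := by decide
  map_add' := by decide

lemma f24_eq_zero_iff (x : ZMod 2) : f24 x = 0 ↔ x = 0 := by revert x; decide

lemma f24_ptwise (a b : ZMod 4) (h : 2 * a * b = 0) :
    a * b = f24 ((gray a).1 * (gray b).1 + (gray a).2 * (gray b).2) := by
  revert h; revert a b; decide

lemma f24_bin (a b : ZMod 2) : f24 (a * b) = 2 * ((a.val : ZMod 4) * (b.val : ZMod 4)) := by
  revert a b; decide

/-- If `2u*v = 0`, then `[u,v] = 2·[Φ(u),Φ(v)]_2`; in particular
`[Φ(u),Φ(v)]_2 = 0` iff `[u,v] = 0`. -/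
theorem stmt13 {α β : ℕ} (u v : Amb α β) (h : star2 u v = 0) :
    zinner u v = 2 * ((binner (Phi u) (Phi v)).val : ZMod 4) ∧
    (binner (Phi u) (Phi v) = 0 ↔ zinner u v = 0) := by
  have hj : ∀ j, 2 * u.2 j * v.2 j = 0 := by
    intro j
    have := congrArg (fun w : Amb α β => w.2 j) h
    simpa [star2] using this
  have key : zinner u v = f24 (binner (Phi u) (Phi v)) := by
    have hz : zinner u v =
        ∑ i, f24 (u.1 i * v.1 i)
        + (∑ j, f24 ((gray (u.2 j)).1 * (gray (v.2 j)).1)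
          + ∑ j, f24 ((gray (u.2 j)).2 * (gray (v.2 j)).2)) := by
      rw [zinner, Finset.mul_sum]
      congr 1
      · exact Finset.sum_congr rfl fun i _ => (f24_bin _ _).symm
      · rw [← Finset.sum_add_distrib]
        exact Finset.sum_congr rfl fun j _ => by
          rw [← map_add]; exact f24_ptwise _ _ (hj j)
    rw [hz, binner, map_add, map_add, map_sum, map_sum, map_sum, add_assoc]
    rfl
  have : f24 (binner (Phi u) (Phi v)) = 2 * ((binner (Phi u) (Phi v)).val : ZMod 4) := rfl
  refine ⟨key.trans this, ?_⟩
  rw [key, f24_eq_zero_iff]
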